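/- Let K = ∂_τ + α∂_φ + β∂_ξ and p(α,β) = g_ττ + 2αg_τφ + 2βg_τξ + 2αβg_φξ + α²g_φφ + β²g_ξξ be the associated quadratic form of the 5D Myers-Perry metric in Eddington–Finkelstein-type coordinates at radius r = r₀ with 0 < r₀ < ρ₋. Then there exist real numbers α, β such that p(α,β) < 0, i.e. K is timelike at the inner boundary. In particular, the discriminant in α of the discriminant in β of p equals (64Δcos⁶θsin²θ/Σ)·((r²+b²)(r²sec²θ + a² + b²tan²θ) + μb²), which is strictly positive when Δ(r₀) > 0 and 0 < θ < π/2. -/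

import Mathlib

set_option maxHeartbeats 1000000 in
private lemma algdisc (t f x ff xx fx : ℝ) :
    (8*x*fx - 8*xx*f)^2 - 4*(4*fx^2 - 4*xx*ff)*(4*x^2 - 4*xx*t)
    = -64*xx*(t*(ff*xx - fx^2) - f*(f*xx - fx*x) + x*(f*fx - ff*x)) := by
  ring

set_option maxHeartbeats 1000000 in
private lemma algdet (a b r v w : ℝ) :
    (-1 + w)*(((r^2+a^2)*(1-v) + a^2*(1-v)^2*w)*((r^2+b^2)*v + b^2*v^2*w)
        - (a*b*(1-v)*v*w)^2)
      - (-(a*(1-v)*w))*((-(a*(1-v)*w))*((r^2+b^2)*v + b^2*v^2*w)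
        - (a*b*(1-v)*v*w)*(-(b*v*w)))
      + (-(b*v*w))*((-(a*(1-v)*w))*(a*b*(1-v)*v*w)
        - ((r^2+a^2)*(1-v) + a^2*(1-v)^2*w)*(-(b*v*w)))
    = -((r^2+a^2)*(r^2+b^2) - w*(r^2+a^2*v+b^2*(1-v))*r^2)*(1-v)*v := by
  ring

set_option maxHeartbeats 1000000 in
private lemma algp (a b r v w : ℝ) (hA : r^2+a^2 ≠ 0) (hB : r^2+b^2 ≠ 0) :
    (-1 + w) + 2*(a/(r^2+a^2))*(-(a*(1-v)*w)) + 2*(b/(r^2+b^2))*(-(b*v*w))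
      + 2*(a/(r^2+a^2))*(b/(r^2+b^2))*(a*b*(1-v)*v*w)
      + (a/(r^2+a^2))^2*((r^2+a^2)*(1-v) + a^2*(1-v)^2*w)
      + (b/(r^2+b^2))^2*((r^2+b^2)*v + b^2*v^2*w)
    = -(((r^2+a^2)*(r^2+b^2) - w*(r^2+a^2*v+b^2*(1-v))*r^2)
        * (r^2 * (r^2+a^2*v+b^2*(1-v))) / (((r^2+a^2)*(r^2+b^2))^2)) := by
  field_simp
  ring

set_option maxHeartbeats 1000000 in
/-- There exist α, β such that K = ∂_τ + α∂_φ + β∂_ξ is timelike at the inner boundary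
r = r₀ (where Δ(r₀) > 0), i.e. p(α,β) = g(K,K) < 0; moreover the discriminant in α of the
discriminant in β of p equals (64Δcos⁶θsin²θ/Σ)((r²+b²)(r²sec²θ + a² + b²tan²θ) + μb²),
which is strictly positive. -/
theorem stmt12 (a b μ r θ S Δ : ℝ)
    (hμ : 0 < μ) (hne : a^2 + b^2 + 2*|a*b| < μ) (hr : 0 < r)
    (hθ1 : 0 < θ) (hθ2 : θ < Real.pi/2)
    (hS : S = r^2 + a^2*(Real.cos θ)^2 + b^2*(Real.sin θ)^2)
    (hΔdef : Δ = (r^2+a^2)*(r^2+b^2) - μ*r^2) (hΔ : 0 < Δ)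
    (gττ gτφ gτξ gφφ gξξ gφξ : ℝ)
    (h1 : gττ = -1 + μ/S)
    (h2 : gτφ = -a*μ*(Real.sin θ)^2/S)
    (h3 : gτξ = -b*μ*(Real.cos θ)^2/S)
    (h4 : gφφ = (r^2+a^2)*(Real.sin θ)^2 + a^2*(Real.sin θ)^4*μ/S)
    (h5 : gξξ = (r^2+b^2)*(Real.cos θ)^2 + b^2*(Real.cos θ)^4*μ/S)
    (h6 : gφξ = a*b*(Real.sin θ)^2*(Real.cos θ)^2*μ/S) :
    (∃ α β : ℝ,
      gττ + 2*α*gτφ + 2*β*gτξ + 2*α*β*gφξ + α^2*gφφ + β^2*gξξ < 0) ∧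
    (8*gτξ*gφξ - 8*gξξ*gτφ)^2 - 4*(4*gφξ^2 - 4*gξξ*gφφ)*(4*gτξ^2 - 4*gξξ*gττ)
      = 64*Δ*(Real.cos θ)^6*(Real.sin θ)^2/S *
          ((r^2+b^2)*(r^2/(Real.cos θ)^2 + a^2 + b^2*(Real.tan θ)^2) + μ*b^2) ∧
    0 < 64*Δ*(Real.cos θ)^6*(Real.sin θ)^2/S *
          ((r^2+b^2)*(r^2/(Real.cos θ)^2 + a^2 + b^2*(Real.tan θ)^2) + μ*b^2) := by
  have hπ := Real.pi_pos
  have hc : 0 < Real.cos θ := Real.cos_pos_of_mem_Ioo ⟨by linarith, hθ2⟩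
  have hs : 0 < Real.sin θ := Real.sin_pos_of_pos_of_lt_pi hθ1 (by linarith)
  have hS0 : 0 < S := by
    rw [hS]; nlinarith [sq_nonneg (a*Real.cos θ), sq_nonneg (b*Real.sin θ), mul_pos hr hr]
  have hA : 0 < r^2 + a^2 := by positivity
  have hB : 0 < r^2 + b^2 := by positivity
  have e1 : r^2 + a^2*(Real.cos θ)^2 + b^2*(1 - (Real.cos θ)^2) = S := by
    rw [hS, Real.sin_sq]
  have hS' : r^2 + a^2*(Real.cos θ)^2 + b^2*(1 - (Real.cos θ)^2) ≠ 0 := by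
    rw [e1]; exact hS0.ne'
  have h1' : gττ = -1 + μ/S := h1
  have h2' : gτφ = -(a*(1-(Real.cos θ)^2)*(μ/S)) := by
    rw [h2, Real.sin_sq]; ring
  have h3' : gτξ = -(b*(Real.cos θ)^2*(μ/S)) := by rw [h3]; ring
  have h4' : gφφ = (r^2+a^2)*(1-(Real.cos θ)^2)
      + a^2*(1-(Real.cos θ)^2)^2*(μ/S) := by
    rw [h4, show (Real.sin θ)^4 = ((Real.sin θ)^2)^2 from by ring, Real.sin_sq]; ring
  have h5' : gξξ = (r^2+b^2)*(Real.cos θ)^2 + b^2*((Real.cos θ)^2)^2*(μ/S) := by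
    rw [h5]; ring
  have h6' : gφξ = a*b*(1-(Real.cos θ)^2)*(Real.cos θ)^2*(μ/S) := by
    rw [h6, Real.sin_sq]; ring
  refine ⟨⟨a/(r^2+a^2), b/(r^2+b^2), ?_⟩, ?_, ?_⟩
  · rw [h1', h2', h3', h4', h5', h6',
      algp a b r ((Real.cos θ)^2) (μ/S) hA.ne' hB.ne', e1,
      div_mul_cancel₀ μ hS0.ne', ← hΔdef]
    have hpos : 0 < Δ * (r^2 * S) / (((r^2+a^2)*(r^2+b^2))^2) :=
      div_pos (mul_pos hΔ (mul_pos (pow_pos hr 2) hS0)) (pow_pos (mul_pos hA hB) 2)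
    linarith
  · rw [algdisc gττ gτφ gτξ gφφ gξξ gφξ, h1', h2', h3', h4', h5', h6',
      algdet a b r ((Real.cos θ)^2) (μ/S), e1,
      div_mul_cancel₀ μ hS0.ne', ← hΔdef,
      Real.tan_eq_sin_div_cos, div_pow, hS, Real.sin_sq]
    field_simp [hc.ne', hS', (by rw [mul_comm (Real.cos θ ^ 2)]; exact hS' :
      r ^ 2 + Real.cos θ ^ 2 * a ^ 2 + b ^ 2 * (1 - Real.cos θ ^ 2) ≠ 0)]
  · have hf1 : 0 < 64*Δ*(Real.cos θ)^6*(Real.sin θ)^2/S :=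
      div_pos (mul_pos (mul_pos (mul_pos (by norm_num : (0:ℝ) < 64) hΔ)
        (pow_pos hc 6)) (pow_pos hs 2)) hS0
    have hf2 : 0 < (r^2+b^2)*(r^2/(Real.cos θ)^2 + a^2 + b^2*(Real.tan θ)^2) + μ*b^2 := by
      have h3 : 0 < r^2/(Real.cos θ)^2 := by positivity
      nlinarith [sq_nonneg (Real.tan θ), sq_nonneg a, sq_nonneg b, mul_pos hB h3,
        mul_nonneg (mul_nonneg (sq_nonneg b) (sq_nonneg (Real.tan θ))) hB.le,
        mul_nonneg hμ.le (sq_nonneg b)]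
    exact mul_pos hf1 hf2
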